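/- arXiv:1506.08324 — 4 statements merged into one kernel-verified Lean document; each statement's English description precedes it below -/
import Mathlib

section
/- For any abelian group A, the sequence Γ(A) → A ⊗ A → Λ²(A) → 0 is exact, where the first map is determined by γ(a) ↦ a ⊗ a and the second map is the canonical surjection a ⊗ b ↦ a ∧ b onto the exterior square. Consequently, with Φ(A) = Ker(Γ(A) → A ⊗ A), there is an exact sequence 0 → Φ(A) → Γ(A) → A ⊗ A → Λ²(A) → 0. -/
/-- The subgroup of relations defining the Whitehead group `Γ(A)`: it is generated by
`γ(0)`, by `γ(−a) − γ(a)`, and by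
`γ(a+b+c) − γ(a+b) − γ(a+c) − γ(b+c) + γ(a) + γ(b) + γ(c)`,
where `γ(a)` stands for the basis element `of a` of the free abelian group on `A`. -/
def whiteheadRels (A : Type*) [AddCommGroup A] : AddSubgroup (FreeAbelianGroup A) :=
  AddSubgroup.closure
    ({FreeAbelianGroup.of (0 : A)} ∪
      {x | ∃ a : A, x = FreeAbelianGroup.of (-a) - FreeAbelianGroup.of a} ∪
      {x | ∃ a b c : A,
        x = FreeAbelianGroup.of (a + b + c) - FreeAbelianGroup.of (a + b) -
            FreeAbelianGroup.of (a + c) - FreeAbelianGroup.of (b + c) +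
            FreeAbelianGroup.of a + FreeAbelianGroup.of b + FreeAbelianGroup.of c})

/-- The Whitehead group `Γ(A)` of an abelian group `A`: the quotient of the free abelian
group on the set `A` by the Whitehead relations. -/
def Whitehead (A : Type*) [AddCommGroup A] : Type _ :=
  FreeAbelianGroup A ⧸ whiteheadRels A

instance (A : Type*) [AddCommGroup A] : AddCommGroup (Whitehead A) :=
  QuotientAddGroup.Quotient.addCommGroup (whiteheadRels A)

/-- The generator `γ(a)` of the Whitehead group `Γ(A)`. -/
def gamma {A : Type*} [AddCommGroup A] (a : A) : Whitehead A :=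
  QuotientAddGroup.mk (FreeAbelianGroup.of a)


open TensorProduct in
private noncomputable def preW (A : Type) [AddCommGroup A] : FreeAbelianGroup A →+ A ⊗[ℤ] A :=
  FreeAbelianGroup.lift (fun a => a ⊗ₜ[ℤ] a)

private lemma rels_le (A : Type) [AddCommGroup A] : whiteheadRels A ≤ (preW A).ker := by
  rw [whiteheadRels, AddSubgroup.closure_le]
  rintro x ((h | ⟨a, rfl⟩) | ⟨a, b, c, rfl⟩)
  · rcases h with rfl
    simp only [SetLike.mem_coe, AddMonoidHom.mem_ker]
    simp [preW]
  · simp only [SetLike.mem_coe, AddMonoidHom.mem_ker]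
    simp [preW, TensorProduct.neg_tmul, TensorProduct.tmul_neg]
  · simp only [SetLike.mem_coe, AddMonoidHom.mem_ker]
    simp only [map_sub, map_add, preW, FreeAbelianGroup.lift_apply_of,
      TensorProduct.add_tmul, TensorProduct.tmul_add]
    abel

open TensorProduct in
private lemma range_eq (A : Type) [AddCommGroup A] (w : Whitehead A →+ A ⊗[ℤ] A)
    (h : ∀ a : A, w (gamma a) = a ⊗ₜ[ℤ] a) :
    w.range = AddSubgroup.closure {z : A ⊗[ℤ] A | ∃ a : A, z = a ⊗ₜ[ℤ] a} := by
  apply le_antisymm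
  · rintro _ ⟨x, rfl⟩
    obtain ⟨y, rfl⟩ := QuotientAddGroup.mk_surjective x
    induction y using FreeAbelianGroup.induction_on with
    | zero =>
      convert (AddSubgroup.closure {z : A ⊗[ℤ] A | ∃ a : A, z = a ⊗ₜ[ℤ] a}).zero_mem using 1
      exact map_zero w
    | of a =>
      exact AddSubgroup.subset_closure ⟨a, h a⟩
    | neg a ha =>
      rw [show (QuotientAddGroup.mk (-(FreeAbelianGroup.of a)) : Whitehead A) =
        -(QuotientAddGroup.mk (FreeAbelianGroup.of a) : Whitehead A) from rfl]
      have := (AddSubgroup.closure _).neg_mem ha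
      convert this using 1
      exact map_neg w _
    | add y z hy hz =>
      rw [show (QuotientAddGroup.mk (y + z) : Whitehead A) =
        (QuotientAddGroup.mk y : Whitehead A) + QuotientAddGroup.mk z from rfl]
      have := (AddSubgroup.closure _).add_mem hy hz
      convert this using 1
      exact map_add w _ _
  · rw [AddSubgroup.closure_le]
    rintro z ⟨a, rfl⟩
    exact ⟨gamma a, h a⟩

open TensorProduct in
/-- For an abelian group `A`, the sequence
`Γ(A) → A ⊗ A → Λ²(A) → 0` is exact, where the first map `w` is determined by
`γ(a) ↦ a ⊗ a` and `Λ²(A)` is the exterior square, i.e. the quotient of `A ⊗ A` by the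
subgroup generated by the elements `a ⊗ a`, with the canonical surjection `a ⊗ b ↦ a ∧ b`.
Consequently, with `Φ(A) = Ker w`, the sequence
`0 → Φ(A) → Γ(A) → A ⊗ A → Λ²(A) → 0` is exact: the inclusion `Φ(A) → Γ(A)` is
injective, the sequence is exact at `Γ(A)` and at `A ⊗ A`, and the canonical map onto
`Λ²(A)` is surjective. -/
theorem stmt8 (A : Type) [AddCommGroup A] :
    (∃ w : Whitehead A →+ A ⊗[ℤ] A, ∀ a : A, w (gamma a) = a ⊗ₜ[ℤ] a) ∧
      ∀ w : Whitehead A →+ A ⊗[ℤ] A, (∀ a : A, w (gamma a) = a ⊗ₜ[ℤ] a) →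
        Function.Injective (w.ker.subtype) ∧
        Function.Exact (w.ker.subtype) w ∧
        Function.Exact w
          (QuotientAddGroup.mk' (AddSubgroup.closure {z : A ⊗[ℤ] A | ∃ a : A, z = a ⊗ₜ[ℤ] a})) ∧
        Function.Surjective
          (QuotientAddGroup.mk' (AddSubgroup.closure {z : A ⊗[ℤ] A | ∃ a : A, z = a ⊗ₜ[ℤ] a})) := by
  constructor
  · refine ⟨QuotientAddGroup.lift (whiteheadRels A) (preW A) (fun x hx => rels_le A hx), ?_⟩
    intro a
    show preW A (FreeAbelianGroup.of a) = _
    simp [preW]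
  · intro w h
    refine ⟨w.ker.subtype_injective, ?_, ?_, QuotientAddGroup.mk'_surjective _⟩
    · intro y
      constructor
      · intro hy
        exact ⟨⟨y, hy⟩, rfl⟩
      · rintro ⟨⟨x, hx⟩, rfl⟩
        exact hx
    · intro z
      rw [QuotientAddGroup.mk'_apply, QuotientAddGroup.eq_zero_iff, ← range_eq A w h]
      exact Iff.rfl
end

section
/- Let G be a group and R₁, …, Rₙ (n ≥ 2) normal subgroups of G. Define ‖R₁,…,Rₙ‖ = ∏ [∩_{i∈I} R_i, ∩_{j∈J} R_j], the product taken over all partitions I ∪ J = {1,…,n} with I ∩ J = ∅, and define ‖𝐫₁,…,𝐫ₙ‖ = Σ ( (∩_{i∈I} 𝐫_i)(∩_{j∈J} 𝐫_j) + (∩_{j∈J} 𝐫_j)(∩_{i∈I} 𝐫_i) ), the sum over the same partitions. Then ‖R₁,…,Rₙ‖ ⊆ D(G, ‖𝐫₁,…,𝐫ₙ‖), i.e. every g ∈ ‖R₁,…,Rₙ‖ satisfies g − 1 ∈ ‖𝐫₁,…,𝐫ₙ‖. -/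
/-- The two-sided ideal `(N-1)ℤ[G]` of the integral group ring `ℤ[G]`
generated by the elements `n - 1` for `n ∈ N`. -/
noncomputable def relIdeal (G : Type*) [Group G] (N : Subgroup G) : TwoSidedIdeal (MonoidAlgebra ℤ G) :=
  TwoSidedIdeal.span {x | ∃ n ∈ N, x = MonoidAlgebra.of ℤ G n - 1}

/-- The product of two two-sided ideals: the ideal generated by products `a * b`
with `a ∈ I`, `b ∈ J`. -/
def tsMul {A : Type*} [Ring A] (I J : TwoSidedIdeal A) : TwoSidedIdeal A :=
  TwoSidedIdeal.span {x | ∃ a ∈ I, ∃ b ∈ J, x = a * b}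

lemma mem_relIdeal {G : Type*} [Group G] {N : Subgroup G} {g : G} (hg : g ∈ N) :
    MonoidAlgebra.of ℤ G g - 1 ∈ relIdeal G N :=
  TwoSidedIdeal.subset_span ⟨g, hg, rfl⟩

lemma mem_tsMul {A : Type*} [Ring A] {I J : TwoSidedIdeal A} {a b : A}
    (ha : a ∈ I) (hb : b ∈ J) : a * b ∈ tsMul I J :=
  TwoSidedIdeal.subset_span ⟨a, ha, b, hb, rfl⟩

open scoped commutatorElement

/-- Let `R₁,…,Rₙ` (`n ≥ 2`) be normal subgroups of `G`.  With
`‖R₁,…,Rₙ‖ = ∏ [∩_{i∈I} Rᵢ, ∩_{j∈J} Rⱼ]` over all partitions `{1,…,n} = I ⊔ J` into two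
nonempty parts (a product of normal subgroups, i.e. a join), and
`‖𝐫₁,…,𝐫ₙ‖ = Σ ((∩_{i∈I} 𝐫ᵢ)(∩_{j∈J} 𝐫ⱼ) + (∩_{j∈J} 𝐫ⱼ)(∩_{i∈I} 𝐫ᵢ))` over the same
partitions, every `g ∈ ‖R₁,…,Rₙ‖` satisfies `g − 1 ∈ ‖𝐫₁,…,𝐫ₙ‖`. -/
theorem stmt12 (G : Type*) [Group G] (n : ℕ) (hn : 2 ≤ n) (R : Fin n → Subgroup G)
    (hR : ∀ i, (R i).Normal) (g : G)
    (hg : g ∈ ⨆ (I : Finset (Fin n)) (_ : I ≠ ∅) (_ : I ≠ Finset.univ),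
      ⁅⨅ i ∈ I, R i, ⨅ j ∈ Iᶜ, R j⁆) :
    MonoidAlgebra.of ℤ G g - 1 ∈
      ⨆ (I : Finset (Fin n)) (_ : I ≠ ∅) (_ : I ≠ Finset.univ),
        (tsMul (⨅ i ∈ I, relIdeal G (R i)) (⨅ j ∈ Iᶜ, relIdeal G (R j)) ⊔
          tsMul (⨅ j ∈ Iᶜ, relIdeal G (R j)) (⨅ i ∈ I, relIdeal G (R i))) := by
  set f := MonoidAlgebra.of ℤ G with hf
  set T : TwoSidedIdeal (MonoidAlgebra ℤ G) :=
    ⨆ (I : Finset (Fin n)) (_ : I ≠ ∅) (_ : I ≠ Finset.univ),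
        (tsMul (⨅ i ∈ I, relIdeal G (R i)) (⨅ j ∈ Iᶜ, relIdeal G (R j)) ⊔
          tsMul (⨅ j ∈ Iᶜ, relIdeal G (R j)) (⨅ i ∈ I, relIdeal G (R i))) with hT
  -- The subgroup of elements `g` with `g - 1 ∈ T`.
  set H : Subgroup G :=
    { carrier := {g : G | f g - 1 ∈ T}
      one_mem' := by simp only [Set.mem_setOf_eq, map_one, sub_self]; exact T.zero_mem
      mul_mem' := by
        intro a b ha hb
        simp only [Set.mem_setOf_eq, map_mul] at *
        have : f a * f b - 1 = (f a - 1) * f b + (f b - 1) := by noncomm_ring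
        rw [this]
        exact T.add_mem (T.mul_mem_right _ _ ha) hb
      inv_mem' := by
        intro a ha
        simp only [Set.mem_setOf_eq] at *
        have h1 : f a * f a⁻¹ = 1 := by rw [← map_mul, mul_inv_cancel, map_one]
        have : f a⁻¹ - 1 = -((f a - 1) * f a⁻¹) := by
          rw [sub_mul, h1, one_mul, neg_sub]
        rw [this]
        exact T.neg_mem (T.mul_mem_right _ _ ha) } with hH
  suffices hle : (⨆ (I : Finset (Fin n)) (_ : I ≠ ∅) (_ : I ≠ Finset.univ),
      ⁅⨅ i ∈ I, R i, ⨅ j ∈ Iᶜ, R j⁆) ≤ H from hle hg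
  refine iSup_le fun I => iSup_le fun hne => iSup_le fun hnu => ?_
  rw [Subgroup.commutator_le]
  intro a ha b hb
  -- `a - 1` lies in the infimum of ideals over `I`, and `b - 1` over `Iᶜ`.
  have haI : f a - 1 ∈ ⨅ i ∈ I, relIdeal G (R i) := by
    rw [TwoSidedIdeal.mem_iInf]
    intro i
    by_cases hi : i ∈ I
    · rw [iInf_pos hi]
      exact mem_relIdeal (Subgroup.mem_iInf.mp (Subgroup.mem_iInf.mp ha i) hi)
    · rw [iInf_neg hi]
      trivial
  have hbI : f b - 1 ∈ ⨅ j ∈ Iᶜ, relIdeal G (R j) := by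
    rw [TwoSidedIdeal.mem_iInf]
    intro j
    by_cases hj : j ∈ Iᶜ
    · rw [iInf_pos hj]
      exact mem_relIdeal (Subgroup.mem_iInf.mp (Subgroup.mem_iInf.mp hb j) hj)
    · rw [iInf_neg hj]
      trivial
  show f ⁅a, b⁆ - 1 ∈ T
  have h1 : f a * f a⁻¹ = 1 := by rw [← map_mul, mul_inv_cancel, map_one]
  have h2 : f b * f b⁻¹ = 1 := by rw [← map_mul, mul_inv_cancel, map_one]
  have key : f ⁅a, b⁆ - 1 =
      (f a - 1) * (f b - 1) * (f a⁻¹ * f b⁻¹)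
        - (f b - 1) * (f a - 1) * (f a⁻¹ * f b⁻¹) := by
    have expand : (f a - 1) * (f b - 1) * (f a⁻¹ * f b⁻¹)
        - (f b - 1) * (f a - 1) * (f a⁻¹ * f b⁻¹)
        = f a * f b * f a⁻¹ * f b⁻¹ - f b * (f a * f a⁻¹) * f b⁻¹ := by noncomm_ring
    rw [expand, h1, mul_one, h2, commutatorElement_def, map_mul, map_mul, map_mul]
  rw [key]
  have hterm : (tsMul (⨅ i ∈ I, relIdeal G (R i)) (⨅ j ∈ Iᶜ, relIdeal G (R j)) ⊔
          tsMul (⨅ j ∈ Iᶜ, relIdeal G (R j)) (⨅ i ∈ I, relIdeal G (R i))) ≤ T := by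
    rw [hT]
    exact le_iSup_of_le I (le_iSup_of_le hne (le_iSup_of_le hnu le_rfl))
  refine T.sub_mem (hterm ?_) (hterm ?_)
  · exact le_sup_left (α := TwoSidedIdeal (MonoidAlgebra ℤ G))
      (TwoSidedIdeal.mul_mem_right _ _ _ (mem_tsMul haI hbI))
  · exact le_sup_right (α := TwoSidedIdeal (MonoidAlgebra ℤ G))
      (TwoSidedIdeal.mul_mem_right _ _ _ (mem_tsMul hbI haI))
end

section
/- Let R be a non-unital ring and I₁, I₂, I₃ two-sided ideals of R. For β ⊆ {1,2,3} write I(β) = ∩_{i∈β} I_i (with I(∅) = R). Then the triple (R; I₁, I₂, I₃) is good — meaning that for all disjoint subsets α, β ⊆ {1,2,3} and every k ∈ {1,2,3} \ (α ∪ β) one has I(β ∪ {k}) ∩ (Σ_{i∈α} I(β ∪ {i})) = Σ_{i∈α} I(β ∪ {k,i}) — if and only if for all i, j, k ∈ {1,2,3} one has I_i ∩ (I_j + I_k) = I_i ∩ I_j + I_i ∩ I_k. -/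
/-- `I(β) = ∩_{i ∈ β} I i`, the intersection of the family of two-sided ideals indexed by
the finite set `β` (with `I(∅)` the whole ring, i.e. `⊤`). -/
def interIdeal {R : Type*} [NonUnitalRing R] {n : ℕ} (I : Fin n → TwoSidedIdeal R)
    (β : Finset (Fin n)) : TwoSidedIdeal R :=
  ⨅ i ∈ β, I i

/-- An `n`-tuple of two-sided ideals `(R; I₁,…,Iₙ)` of a non-unital ring is *good* if for
all disjoint `α, β ⊆ {1,…,n}` and all `k ∉ α ∪ β`:
`I(β∪{k}) ∩ (Σ_{i∈α} I(β∪{i})) = Σ_{i∈α} I(β∪{k,i})` (sums of ideals are joins). -/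
def GoodTuple {R : Type*} [NonUnitalRing R] {n : ℕ} (I : Fin n → TwoSidedIdeal R) : Prop :=
  ∀ α β : Finset (Fin n), Disjoint α β → ∀ k ∉ α ∪ β,
    interIdeal I (insert k β) ⊓ (⨆ i ∈ α, interIdeal I (insert i β)) =
      ⨆ i ∈ α, interIdeal I (insert k (insert i β))

lemma interIdeal_insert {R : Type*} [NonUnitalRing R] {n : ℕ} (I : Fin n → TwoSidedIdeal R)
    (k : Fin n) (β : Finset (Fin n)) :
    interIdeal I (insert k β) = I k ⊓ interIdeal I β :=
  Finset.iInf_insert k β I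

lemma interIdeal_insert_insert {R : Type*} [NonUnitalRing R] {n : ℕ} (I : Fin n → TwoSidedIdeal R)
    (k i : Fin n) (β : Finset (Fin n)) :
    interIdeal I (insert k (insert i β)) = interIdeal I (insert k β) ⊓ interIdeal I (insert i β) := by
  simp only [interIdeal_insert]
  rw [← inf_assoc, inf_inf_distrib_right]

lemma interIdeal_empty {R : Type*} [NonUnitalRing R] {n : ℕ} (I : Fin n → TwoSidedIdeal R) :
    interIdeal I ∅ = ⊤ := by
  simp [interIdeal]

/-- A triple `(R; I₁, I₂, I₃)` of two-sided ideals of a non-unital ring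
is good if and only if `Iᵢ ∩ (Iⱼ + Iₖ) = Iᵢ ∩ Iⱼ + Iᵢ ∩ Iₖ` for all `i, j, k ∈ {1,2,3}`. -/
theorem stmt13 {R : Type*} [NonUnitalRing R] (I : Fin 3 → TwoSidedIdeal R) :
    GoodTuple I ↔ ∀ i j k : Fin 3, I i ⊓ (I j ⊔ I k) = I i ⊓ I j ⊔ I i ⊓ I k := by
  constructor
  · intro hg i j k
    by_cases hij : i = j
    · subst hij; simp [inf_sup_self]
    by_cases hik : i = k
    · subst hik
      rw [sup_comm, inf_sup_self, inf_idem, sup_comm, sup_inf_self]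
    by_cases hjk : j = k
    · subst hjk; simp
    have := hg {j, k} ∅ (by simp) i (by simp [hij, hik])
    simpa only [Finset.iSup_insert, Finset.iSup_singleton, interIdeal_insert, interIdeal_empty,
      inf_top_eq] using this
  · intro h α β hd k hk
    have hkα : k ∉ α := fun h' => hk (Finset.mem_union_left _ h')
    have hkβ : k ∉ β := fun h' => hk (Finset.mem_union_right _ h')
    have hcard : α.card ≤ 2 := by
      have hsub : α ⊆ Finset.univ.erase k := fun x hx =>
        Finset.mem_erase.mpr ⟨fun e => hkα (e ▸ hx), Finset.mem_univ x⟩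
      have := Finset.card_le_card hsub
      simpa using this
    interval_cases hc : α.card
    · obtain rfl := Finset.card_eq_zero.mp hc
      simp
    · obtain ⟨i, rfl⟩ := Finset.card_eq_one.mp hc
      simp [Finset.iSup_singleton, interIdeal_insert_insert]
    · obtain ⟨i, j, hij, rfl⟩ := Finset.card_eq_two.mp hc
      have hki : k ≠ i := fun e => hkα (by simp [e])
      have hkj : k ≠ j := fun e => hkα (by simp [e])
      have hβ : β = ∅ := by
        rw [Finset.eq_empty_iff_forall_notMem]
        intro x hx
        have hxi : x ≠ i := fun e => (Finset.disjoint_right.mp hd hx) (by simp [e])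
        have hxj : x ≠ j := fun e => (Finset.disjoint_right.mp hd hx) (by simp [e])
        have hxk : x ≠ k := fun e => hkβ (e ▸ hx)
        have huniv : ({i, j, k} : Finset (Fin 3)) = Finset.univ := by
          apply Finset.eq_univ_of_card
          rw [Finset.card_insert_of_notMem (by simp [hij, Ne.symm hki]),
            Finset.card_insert_of_notMem (by simp [Ne.symm hkj]),
            Finset.card_singleton]
          simp
        have : x ∈ ({i, j, k} : Finset (Fin 3)) := huniv ▸ Finset.mem_univ x
        simp [hxi, hxj, hxk] at this
      subst hβ
      simp only [Finset.iSup_insert, Finset.iSup_singleton, interIdeal_insert, interIdeal_empty,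
        inf_top_eq]
      exact h k i j
end

section
/- Let ℛ be an n-cube of non-unital rings, i.e. a functor from the poset of subsets of ⟨n⟩ = {1,…,n} (ordered by inclusion) to non-unital rings. For disjoint α, β ⊆ ⟨n⟩ define E(α,β) = Ker( ℛ(α) → ∏_{i∈β} ℛ(α ∪ {i}) ), the kernel of the map whose components are the structure maps. Then the following are equivalent: (1) for every α ⊆ ⟨n⟩ and every family (r_i)_{i ∉ α} with r_i ∈ ℛ(α ∪ {i}) satisfying that the images of r_i and r_j in ℛ(α ∪ {i,j}) coincide for all i, j ∉ α, there exists r ∈ ℛ(α) whose image in ℛ(α ∪ {i}) is r_i for every i ∉ α; (2) for all disjoint α, β ⊆ ⟨n⟩ and all k ∈ ⟨n⟩ \ (α ∪ β), the sequence 0 → E(α, β ∪ {k}) → E(α, β) → E(α ∪ {k}, β) → 0 is a short exact sequence of non-unital rings (where the maps are the inclusion and the map induced by ℛ(α) → ℛ(α ∪ {k})). -/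
/-- An `n`-cube of non-unital rings: a functor from the poset of subsets of `{1,…,n}`
(ordered by inclusion) to non-unital rings. -/
structure RingCube (n : ℕ) where
  /-- the ring at the vertex `α` -/
  obj : Finset (Fin n) → Type*
  /-- each vertex carries a non-unital ring structure -/
  ring : ∀ α, NonUnitalRing (obj α)
  /-- the structure map for an inclusion `α ⊆ α'` -/
  map : ∀ {α α' : Finset (Fin n)}, α ⊆ α' → (obj α →ₙ+* obj α')
  map_id : ∀ α : Finset (Fin n), map (Finset.Subset.refl α) = NonUnitalRingHom.id (obj α)
  map_comp : ∀ {α α' α'' : Finset (Fin n)} (h : α ⊆ α') (h' : α' ⊆ α''),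
    map (h.trans h') = (map h').comp (map h)

attribute [instance] RingCube.ring

/-- `E(α,β)`: the kernel of `ℛ(α) → ∏_{i∈β} ℛ(α ∪ {i})`, as a subset of `ℛ(α)`. -/
def Ecube {n : ℕ} (ℛ : RingCube n) (α β : Finset (Fin n)) : Set (ℛ.obj α) :=
  {x | ∀ i ∈ β, ℛ.map (Finset.subset_insert i α) x = 0}

/-- An `n`-cube of non-unital rings is *fibrant* if every compatible collection
`(rᵢ)_{i∉α}`, `rᵢ ∈ ℛ(α∪{i})` (images of `rᵢ` and `rⱼ` agreeing in `ℛ(α∪{i,j})`)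
admits a lifting `r ∈ ℛ(α)`. -/
def RingCube.Fibrant {n : ℕ} (ℛ : RingCube n) : Prop :=
  ∀ (α : Finset (Fin n)) (r : (i : Fin n) → i ∉ α → ℛ.obj (insert i α)),
    (∀ (i j : Fin n) (hi : i ∉ α) (hj : j ∉ α),
      ℛ.map (Finset.insert_subset_insert i (Finset.subset_insert j α)) (r i hi) =
        ℛ.map (Finset.subset_insert i (insert j α)) (r j hj)) →
    ∃ x : ℛ.obj α, ∀ (i : Fin n) (hi : i ∉ α), ℛ.map (Finset.subset_insert i α) x = r i hi

lemma RingCube.comp_apply {n : ℕ} (ℛ : RingCube n) {α α' α'' : Finset (Fin n)}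
    (h : α ⊆ α') (h' : α' ⊆ α'') (x : ℛ.obj α) :
    ℛ.map h' (ℛ.map h x) = ℛ.map (h.trans h') x := by
  rw [ℛ.map_comp h h']; rfl

/-- Partial lifting: any compatible family over a subset `S` of the complement of `α`
lifts to `ℛ(α)`, assuming fibrancy. -/
lemma RingCube.exists_lift {n : ℕ} (ℛ : RingCube n) (hfib : ℛ.Fibrant) :
    ∀ (m : ℕ) (α S : Finset (Fin n)), Disjoint α S →
      ((Finset.univ : Finset (Fin n)) \ (α ∪ S)).card ≤ m →
      ∀ (r : (i : Fin n) → i ∈ S → ℛ.obj (insert i α)),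
        (∀ (i j : Fin n) (hi : i ∈ S) (hj : j ∈ S),
          ℛ.map (Finset.insert_subset_insert i (Finset.subset_insert j α)) (r i hi) =
            ℛ.map (Finset.subset_insert i (insert j α)) (r j hj)) →
        ∃ x : ℛ.obj α, ∀ (i : Fin n) (hi : i ∈ S),
          ℛ.map (Finset.subset_insert i α) x = r i hi := by
  intro m
  induction m with
  | zero =>
    intro α S hdisj hcard r hcompat
    have hfull : (Finset.univ : Finset (Fin n)) \ (α ∪ S) = ∅ :=
      Finset.card_eq_zero.mp (Nat.le_antisymm hcard (Nat.zero_le _))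
    have hmem : ∀ i : Fin n, i ∉ α → i ∈ S := by
      intro i hi
      by_contra hiS
      have : i ∈ (Finset.univ : Finset (Fin n)) \ (α ∪ S) := by
        simp [hi, hiS]
      simp [hfull] at this
    obtain ⟨x, hx⟩ := hfib α (fun i hi => r i (hmem i hi)) (fun i j hi hj =>
      hcompat i j (hmem i hi) (hmem j hj))
    exact ⟨x, fun i hi => hx i (Finset.disjoint_right.mp hdisj hi)⟩
  | succ m ih =>
    intro α S hdisj hcard r hcompat
    by_cases hfull : (Finset.univ : Finset (Fin n)) \ (α ∪ S) = ∅
    · have hmem : ∀ i : Fin n, i ∉ α → i ∈ S := by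
        intro i hi
        by_contra hiS
        have : i ∈ (Finset.univ : Finset (Fin n)) \ (α ∪ S) := by
          simp [hi, hiS]
        simp [hfull] at this
      obtain ⟨x, hx⟩ := hfib α (fun i hi => r i (hmem i hi)) (fun i j hi hj =>
        hcompat i j (hmem i hi) (hmem j hj))
      exact ⟨x, fun i hi => hx i (Finset.disjoint_right.mp hdisj hi)⟩
    · obtain ⟨m₀, hm₀⟩ := Finset.nonempty_iff_ne_empty.mpr hfull
      rw [Finset.mem_sdiff, Finset.mem_union] at hm₀
      have hm₀α : m₀ ∉ α := fun h => hm₀.2 (Or.inl h)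
      have hm₀S : m₀ ∉ S := fun h => hm₀.2 (Or.inr h)
      -- the pushed-forward family over `S` at base `insert m₀ α`
      set r₂ : (i : Fin n) → i ∈ S → ℛ.obj (insert i (insert m₀ α)) :=
        fun i hi => ℛ.map (Finset.insert_subset_insert i (Finset.subset_insert m₀ α)) (r i hi)
        with hr₂
      have hcompat₂ : ∀ (i j : Fin n) (hi : i ∈ S) (hj : j ∈ S),
          ℛ.map (Finset.insert_subset_insert i (Finset.subset_insert j (insert m₀ α))) (r₂ i hi) =
            ℛ.map (Finset.subset_insert i (insert j (insert m₀ α))) (r₂ j hj) := by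
        intro i j hi hj
        have e : insert i (insert j α) ⊆ insert i (insert j (insert m₀ α)) :=
          Finset.insert_subset_insert i (Finset.insert_subset_insert j (Finset.subset_insert m₀ α))
        have h1 := congrArg (ℛ.map e) (hcompat i j hi hj)
        rw [ℛ.comp_apply, ℛ.comp_apply] at h1
        simp only [hr₂]
        rw [ℛ.comp_apply, ℛ.comp_apply]
        exact h1
      have hcard' : ((Finset.univ : Finset (Fin n)) \ (insert m₀ α ∪ S)).card ≤ m := by
        have hsub : (Finset.univ : Finset (Fin n)) \ (insert m₀ α ∪ S) ⊆
            (Finset.univ : Finset (Fin n)) \ (α ∪ S) :=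
          Finset.sdiff_subset_sdiff (Finset.Subset.refl _)
            (Finset.union_subset_union (Finset.subset_insert m₀ α) (Finset.Subset.refl _))
        have hss : (Finset.univ : Finset (Fin n)) \ (insert m₀ α ∪ S) ⊂
            (Finset.univ : Finset (Fin n)) \ (α ∪ S) := by
          rw [Finset.ssubset_iff_of_subset hsub]
          refine ⟨m₀, by simp [hm₀α, hm₀S], by simp⟩
        have := Finset.card_lt_card hss
        omega
      obtain ⟨x₀, hx₀⟩ := ih (insert m₀ α) S
        (Finset.disjoint_insert_left.mpr ⟨hm₀S, hdisj⟩) hcard' r₂ hcompat₂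
      -- extend the family by `x₀` at `m₀`
      set r₃ : (i : Fin n) → i ∈ insert m₀ S → ℛ.obj (insert i α) :=
        fun i hi => if h : i = m₀ then h ▸ x₀ else
          r i ((Finset.mem_insert.mp hi).resolve_left h) with hr₃
      have hr₃m₀ : ∀ (hi : m₀ ∈ insert m₀ S), r₃ m₀ hi = x₀ := by
        intro hi; simp [hr₃]
      have hr₃S : ∀ (i : Fin n) (hi : i ∈ S) (hi' : i ∈ insert m₀ S), r₃ i hi' = r i hi := by
        intro i hi hi'
        have : i ≠ m₀ := fun h => hm₀S (h ▸ hi)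
        simp [hr₃, this]
      have hcompat₃ : ∀ (i j : Fin n) (hi : i ∈ insert m₀ S) (hj : j ∈ insert m₀ S),
          ℛ.map (Finset.insert_subset_insert i (Finset.subset_insert j α)) (r₃ i hi) =
            ℛ.map (Finset.subset_insert i (insert j α)) (r₃ j hj) := by
        intro i j hi hj
        by_cases hik : i = m₀
        · subst hik
          rw [hr₃m₀ hi]
          by_cases hjk : j = i
          · subst hjk
            rw [hr₃m₀ hj]
          · have hjS : j ∈ S := (Finset.mem_insert.mp hj).resolve_left hjk
            rw [hr₃S j hjS hj]
            have e : insert j (insert i α) ⊆ insert i (insert j α) :=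
              by rw [Finset.insert_comm j i α]
            have h1 := congrArg (ℛ.map e) (hx₀ j hjS)
            simp only [hr₂] at h1
            rw [ℛ.comp_apply, ℛ.comp_apply] at h1
            exact h1
        · have hiS : i ∈ S := (Finset.mem_insert.mp hi).resolve_left hik
          rw [hr₃S i hiS hi]
          by_cases hjk : j = m₀
          · subst hjk
            rw [hr₃m₀ hj]
            have h1 := hx₀ i hiS
            simp only [hr₂] at h1
            exact h1.symm
          · have hjS : j ∈ S := (Finset.mem_insert.mp hj).resolve_left hjk
            rw [hr₃S j hjS hj]
            exact hcompat i j hiS hjS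
      have hcard'' : ((Finset.univ : Finset (Fin n)) \ (α ∪ insert m₀ S)).card ≤ m := by
        have : α ∪ insert m₀ S = insert m₀ α ∪ S := by
          ext j; simp only [Finset.mem_union, Finset.mem_insert]; tauto
        rw [this]; exact hcard'
      obtain ⟨x, hx⟩ := ih α (insert m₀ S)
        (Finset.disjoint_insert_right.mpr ⟨hm₀α, hdisj⟩) hcard'' r₃ hcompat₃
      refine ⟨x, fun i hi => ?_⟩
      exact (hx i (Finset.mem_insert_of_mem hi)).trans (hr₃S i hi (Finset.mem_insert_of_mem hi))

lemma RingCube.surj {n : ℕ} (ℛ : RingCube n) (hfib : ℛ.Fibrant)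
    (α β : Finset (Fin n)) (hdisj : Disjoint α β) (k : Fin n) (hk : k ∉ α ∪ β) :
    ∀ y ∈ Ecube ℛ (insert k α) β,
      ∃ x ∈ Ecube ℛ α β, ℛ.map (Finset.subset_insert k α) x = y := by
  intro y hy
  rw [Finset.mem_union] at hk
  have hkα : k ∉ α := fun h => hk (Or.inl h)
  have hkβ : k ∉ β := fun h => hk (Or.inr h)
  set r : (i : Fin n) → i ∈ insert k β → ℛ.obj (insert i α) :=
    fun i hi => if h : i = k then h ▸ y else 0 with hr
  have hrk : ∀ hi, r k hi = y := by intro hi; simp [hr]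
  have hrβ : ∀ (i : Fin n) (hi : i ∈ β) (hi' : i ∈ insert k β), r i hi' = 0 := by
    intro i hi hi'
    have : i ≠ k := fun h => hkβ (h ▸ hi)
    simp [hr, this]
  have hcompat : ∀ (i j : Fin n) (hi : i ∈ insert k β) (hj : j ∈ insert k β),
      ℛ.map (Finset.insert_subset_insert i (Finset.subset_insert j α)) (r i hi) =
        ℛ.map (Finset.subset_insert i (insert j α)) (r j hj) := by
    intro i j hi hj
    by_cases hik : i = k
    · subst hik
      rw [hrk hi]
      by_cases hjk : j = i
      · subst hjk; rw [hrk hj]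
      · have hjβ : j ∈ β := (Finset.mem_insert.mp hj).resolve_left hjk
        rw [hrβ j hjβ hj, map_zero]
        have e : insert j (insert i α) ⊆ insert i (insert j α) := by
          rw [Finset.insert_comm j i α]
        have h1 := congrArg (ℛ.map e) (hy j hjβ)
        rw [ℛ.comp_apply, map_zero] at h1
        exact h1
    · have hiβ : i ∈ β := (Finset.mem_insert.mp hi).resolve_left hik
      rw [hrβ i hiβ hi, map_zero]
      by_cases hjk : j = k
      · subst hjk
        rw [hrk hj]
        exact (hy i hiβ).symm
      · have hjβ : j ∈ β := (Finset.mem_insert.mp hj).resolve_left hjk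
        rw [hrβ j hjβ hj, map_zero]
  obtain ⟨x, hx⟩ := ℛ.exists_lift hfib
    ((Finset.univ : Finset (Fin n)) \ (α ∪ insert k β)).card α (insert k β)
    (Finset.disjoint_insert_right.mpr ⟨hkα, hdisj⟩) (le_refl _) r hcompat
  refine ⟨x, fun i hi => ?_, ?_⟩
  · rw [hx i (Finset.mem_insert_of_mem hi), hrβ i hi (Finset.mem_insert_of_mem hi)]
  · rw [hx k (Finset.mem_insert_self k β), hrk (Finset.mem_insert_self k β)]

/-- For an `n`-cube `ℛ` of non-unital rings, the following are
equivalent: (1) `ℛ` is fibrant (every compatible collection over the complement of a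
vertex lifts); (2) for all disjoint `α, β` and `k ∉ α ∪ β`, the sequence
`0 → E(α, β∪{k}) → E(α, β) → E(α∪{k}, β) → 0` is short exact: the map
`ℛ(α) → ℛ(α∪{k})` carries `E(α,β)` into `E(α∪{k},β)`, its kernel within
`E(α,β)` is exactly `E(α, β∪{k})` (the first map being the inclusion, automatically
injective), and `E(α,β) → E(α∪{k},β)` is surjective. -/
theorem stmt14 {n : ℕ} (ℛ : RingCube n) :
    ℛ.Fibrant ↔
      ∀ α β : Finset (Fin n), Disjoint α β → ∀ k ∉ α ∪ β,
        (∀ x ∈ Ecube ℛ α β,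
          ℛ.map (Finset.subset_insert k α) x ∈ Ecube ℛ (insert k α) β) ∧
        (∀ x ∈ Ecube ℛ α β,
          (x ∈ Ecube ℛ α (insert k β) ↔ ℛ.map (Finset.subset_insert k α) x = 0)) ∧
        (∀ y ∈ Ecube ℛ (insert k α) β,
          ∃ x ∈ Ecube ℛ α β, ℛ.map (Finset.subset_insert k α) x = y) := by
  constructor
  · intro hfib α β hdisj k hk
    refine ⟨?_, ?_, ?_⟩
    · intro x hx i hi
      have h1 := congrArg
        (ℛ.map (Finset.insert_subset_insert i (Finset.subset_insert k α))) (hx i hi)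
      rw [ℛ.comp_apply, map_zero] at h1
      rw [ℛ.comp_apply]
      exact h1
    · intro x hx
      constructor
      · intro h; exact h k (Finset.mem_insert_self k β)
      · intro h i hi
        rcases Finset.mem_insert.mp hi with rfl | hi'
        · exact h
        · exact hx i hi'
    · exact ℛ.surj hfib α β hdisj k hk
  · intro H α r hcompat
    have key : ∀ T : Finset (Fin n), Disjoint α T →
        ∃ x : ℛ.obj α, ∀ (i : Fin n) (hi : i ∈ T) (hi' : i ∉ α),
          ℛ.map (Finset.subset_insert i α) x = r i hi' := by
      intro T
      induction T using Finset.induction_on with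
      | empty => exact fun _ => ⟨0, fun i hi => absurd hi (Finset.notMem_empty i)⟩
      | @insert k T hkT ihT =>
        intro hdisj
        obtain ⟨x, hx⟩ := ihT (hdisj.mono_right (Finset.subset_insert k T))
        have hkα : k ∉ α := Finset.disjoint_right.mp hdisj (Finset.mem_insert_self k T)
        set d : ℛ.obj (insert k α) := r k hkα - ℛ.map (Finset.subset_insert k α) x with hd
        have hdE : d ∈ Ecube ℛ (insert k α) T := by
          intro i hi
          have hiα : i ∉ α := Finset.disjoint_right.mp hdisj (Finset.mem_insert_of_mem hi)
          rw [hd, map_sub, ℛ.comp_apply]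
          have h1 := hcompat i k hiα hkα
          rw [← h1, ← hx i hi hiα, ℛ.comp_apply]
          exact sub_self _
        have hk' : k ∉ α ∪ T := by
          rw [Finset.mem_union]
          rintro (h | h)
          · exact hkα h
          · exact hkT h
        obtain ⟨e, heE, hek⟩ :=
          (H α T (hdisj.mono_right (Finset.subset_insert k T)) k hk').2.2 d hdE
        refine ⟨x + e, fun i hi hi' => ?_⟩
        rcases Finset.mem_insert.mp hi with rfl | hiT
        · have hre : r i hi' = r i hkα := rfl
          rw [map_add, hek, hd, hre]
          abel
        · rw [map_add, hx i hiT hi', heE i hiT, add_zero]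
    obtain ⟨x, hx⟩ := key αᶜ disjoint_compl_right
    exact ⟨x, fun i hi => hx i (Finset.mem_compl.mpr hi) hi⟩
end
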